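/- Let A₀ be a self-adjoint operator on a Hilbert space that is a countable orthogonal direct sum A₀ = ⊕_{n∈ℕ₀} (H + n), where H is a fixed self-adjoint operator with purely absolutely continuous spectrum [1/2, ∞) of constant multiplicity 2. Then σ(A₀) = [1/2, ∞), the spectrum of A₀ is purely absolutely continuous, and its multiplicity function equals 2n a.e. on the interval (n − 1/2, n + 1/2) for each n ∈ ℕ. -/

import Mathlib

open MeasureTheory

/-- The spectral model measure for an operator with purely a.c. spectrum `[1/2, ∞)`
of constant multiplicity `2`: two copies of Lebesgue measure on `[1/2, ∞)`. -/
noncomputable def rhoModel : Measure (ℝ × Fin 2) :=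
  Measure.sum fun j : Fin 2 =>
    (volume.restrict (Set.Ici (1 / 2 : ℝ))).map fun x => (x, j)

/-- The spectral model measure for `⊕ₙ (H + n)`: for each `(n, j) ∈ ℕ × Fin 2`
a copy of Lebesgue measure on `[n + 1/2, ∞)`. -/
noncomputable def nuModel : Measure (ℝ × (ℕ × Fin 2)) :=
  Measure.sum fun p : ℕ × Fin 2 =>
    (volume.restrict (Set.Ici ((p.1 : ℝ) + 1 / 2))).map fun x => (x, p)

open scoped ENNReal NNReal

namespace DSAC

noncomputable def mu0 : Measure ℝ := volume.restrict (Set.Ici (1 / 2 : ℝ))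

variable {ι : Type*} [MeasurableSpace ι] [MeasurableSingletonClass ι]

/-- the embedding of the `c`-th sheet, shifted by `n`. -/
def emb (n : ℝ) (c : ι) : ℝ → ℝ × ι := fun x => (x + n, c)

lemma sheet_me (c : ι) : MeasurableEmbedding (fun x : ℝ => (x, c)) := by
  refine ⟨fun x y hxy => by simpa using congrArg Prod.fst hxy,
    measurable_id.prodMk measurable_const, fun s hs => ?_⟩
  have : (fun x : ℝ => (x, c)) '' s = s ×ˢ {c} := by
    ext ⟨a, b⟩
    constructor
    · rintro ⟨x, hx, h⟩
      obtain ⟨rfl, rfl⟩ := Prod.mk.injEq .. ▸ h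
      exact ⟨hx, rfl⟩
    · rintro ⟨h1, h2⟩
      exact ⟨a, h1, by simp at h2 ⊢; exact h2.symm⟩
  rw [this]
  exact hs.prod (measurableSet_singleton c)

lemma emb_me (n : ℝ) (c : ι) : MeasurableEmbedding (emb n c) := by
  have h1 : MeasurableEmbedding (fun x : ℝ => x + n) :=
    (Homeomorph.addRight n).measurableEmbedding
  exact (sheet_me c).comp h1

lemma map_add_mu0 (n : ℝ) (hn : 0 ≤ n) :
    mu0.map (fun x => x + n) = volume.restrict (Set.Ici (n + 1 / 2)) := by
  have hpre : (fun x : ℝ => x + n) ⁻¹' Set.Ici (n + 1 / 2) = Set.Ici (1 / 2 : ℝ) := by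
    ext x; simp only [Set.mem_preimage, Set.mem_Ici]; constructor <;> intro h <;> linarith
  have := Measure.restrict_map (f := fun x : ℝ => x + n) (μ := volume)
    (measurable_add_const n) (measurableSet_Ici (a := n + 1 / 2))
  rw [map_add_right_eq_self volume n, hpre] at this
  exact this.symm

lemma nu_eq : nuModel = Measure.sum (fun p : ℕ × Fin 2 => mu0.map (emb (p.1 : ℝ) p)) := by
  unfold nuModel
  congr 1
  funext p
  rw [← map_add_mu0 (p.1 : ℝ) (Nat.cast_nonneg _),
    Measure.map_map (sheet_me p).measurable (measurable_add_const _)]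
  rfl

lemma rho_eq : rhoModel = Measure.sum (fun j : Fin 2 => mu0.map (emb (0 : ℝ) j)) := by
  unfold rhoModel
  congr 1
  funext j
  have : emb (0 : ℝ) j = fun x : ℝ => (x, j) := by funext x; simp [emb]
  rw [this]; rfl

lemma ae_map_emb {n : ℝ} {c : ι} {P : ℝ × ι → Prop} :
    (∀ᵐ q ∂(mu0.map (emb n c)), P q) ↔ ∀ᵐ x ∂mu0, P (x + n, c) := by
  rw [ae_iff, ae_iff, (emb_me n c).map_apply]
  rfl

lemma ae_nu_iff {P : ℝ × (ℕ × Fin 2) → Prop} :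
    (∀ᵐ q ∂nuModel, P q) ↔ ∀ (n : ℕ) (j : Fin 2), ∀ᵐ x ∂mu0, P (x + n, (n, j)) := by
  rw [nu_eq, Measure.ae_sum_iff]
  simp only [Prod.forall]
  exact forall_congr' fun n => forall_congr' fun j => ae_map_emb

lemma ae_rho_iff {P : ℝ × Fin 2 → Prop} :
    (∀ᵐ q ∂rhoModel, P q) ↔ ∀ j : Fin 2, ∀ᵐ x ∂mu0, P (x, j) := by
  rw [rho_eq, Measure.ae_sum_iff]
  refine forall_congr' fun j => ?_
  rw [ae_map_emb]
  simp [emb]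

lemma lint_nu (f : ℝ × (ℕ × Fin 2) → ℝ≥0∞) :
    ∫⁻ q, f q ∂nuModel = ∑' (n : ℕ) (j : Fin 2), ∫⁻ x, f (x + n, (n, j)) ∂mu0 := by
  rw [nu_eq, lintegral_sum_measure, ENNReal.tsum_prod']
  exact tsum_congr fun n => tsum_congr fun j => (emb_me (n : ℝ) (n, j)).lintegral_map f

lemma lint_rho (f : ℝ × Fin 2 → ℝ≥0∞) :
    ∫⁻ q, f q ∂rhoModel = ∑' (j : Fin 2), ∫⁻ x, f (x, j) ∂mu0 := by
  rw [rho_eq, lintegral_sum_measure]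
  refine tsum_congr fun j => ?_
  rw [(emb_me (0 : ℝ) j).lintegral_map f]
  simp [emb]

lemma aesm_nu_iff {f : ℝ × (ℕ × Fin 2) → ℂ} :
    AEStronglyMeasurable f nuModel ↔
      ∀ (n : ℕ) (j : Fin 2), AEStronglyMeasurable (fun x => f (x + n, (n, j))) mu0 := by
  rw [nu_eq, aestronglyMeasurable_sum_measure_iff]
  simp only [Prod.forall]
  exact forall_congr' fun n => forall_congr' fun j =>
    (emb_me (n : ℝ) (n, j)).aestronglyMeasurable_map_iff

lemma aesm_rho_iff {f : ℝ × Fin 2 → ℂ} :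
    AEStronglyMeasurable f rhoModel ↔
      ∀ j : Fin 2, AEStronglyMeasurable (fun x => f (x, j)) mu0 := by
  rw [rho_eq, aestronglyMeasurable_sum_measure_iff]
  refine forall_congr' fun j => ?_
  rw [(emb_me (0 : ℝ) j).aestronglyMeasurable_map_iff]
  constructor <;> intro h <;> [skip; skip] <;>
    · convert h using 2 <;> simp [emb]


lemma lint_sq_eq {α : Type*} [MeasurableSpace α] {μ : Measure α} {f : α → ℂ}
    (hf : MemLp f 2 μ) :
    ∫⁻ x, (‖f x‖₊ : ℝ≥0∞) ^ (2 : ℝ) ∂μ = ENNReal.ofReal (‖hf.toLp f‖ ^ 2) := by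
  set I := ∫⁻ x, (‖f x‖₊ : ℝ≥0∞) ^ (2 : ℝ) ∂μ with hI
  have he : eLpNorm f 2 μ = I ^ (1 / (2 : ℝ)) := by
    rw [eLpNorm_eq_lintegral_rpow_enorm_toReal (by norm_num) (by norm_num)]
    norm_num
    congr 1
    exact lintegral_congr fun x => by rw [← ENNReal.rpow_natCast]; norm_num; rw [enorm_eq_nnnorm]
  have hI2 : I = eLpNorm f 2 μ ^ (2 : ℝ) := by
    rw [he, ← ENNReal.rpow_mul]; norm_num
  have hIne : I ≠ ∞ := by
    rw [hI2]; exact ENNReal.rpow_ne_top_of_nonneg (by norm_num) hf.2.ne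
  rw [Lp.norm_toLp f hf]
  have : (eLpNorm f 2 μ).toReal ^ (2 : ℕ) = (eLpNorm f 2 μ ^ (2 : ℝ)).toReal := by
    rw [← ENNReal.toReal_rpow]
    norm_num
  rw [this, ← hI2, ENNReal.ofReal_toReal hIne]

lemma lint_sq_lp {α : Type*} [MeasurableSpace α] {μ : Measure α} (h : Lp ℂ 2 μ) :
    ∫⁻ x, (‖h x‖₊ : ℝ≥0∞) ^ (2 : ℝ) ∂μ = ENNReal.ofReal (‖h‖ ^ 2) := by
  have := lint_sq_eq (Lp.memLp h)
  rwa [Lp.toLp_coeFn] at this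


lemma eLpNorm_two {α : Type*} [MeasurableSpace α] (μ : Measure α) (f : α → ℂ) :
    eLpNorm f 2 μ = (∫⁻ x, (‖f x‖₊ : ℝ≥0∞) ^ (2 : ℝ) ∂μ) ^ (1 / (2 : ℝ)) := by
  rw [eLpNorm_eq_lintegral_rpow_enorm_toReal (by norm_num) (by norm_num)]
  norm_num
  simp only [enorm_eq_nnnorm]

lemma memℒp_two_of_lint {α : Type*} [MeasurableSpace α] {μ : Measure α} {f : α → ℂ} {c : ℝ}
    (hm : AEStronglyMeasurable f μ)
    (h : ∫⁻ x, (‖f x‖₊ : ℝ≥0∞) ^ (2 : ℝ) ∂μ = ENNReal.ofReal c) : MemLp f 2 μ := by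
  refine ⟨hm, ?_⟩
  rw [eLpNorm_two, h]
  exact ENNReal.rpow_lt_top_of_nonneg (by norm_num) ENNReal.ofReal_ne_top

lemma norm_toLp_of_lint {α : Type*} [MeasurableSpace α] {μ : Measure α} {f : α → ℂ} {c : ℝ}
    (hf : MemLp f 2 μ) (hc : 0 ≤ c)
    (h : ∫⁻ x, (‖f x‖₊ : ℝ≥0∞) ^ (2 : ℝ) ∂μ = ENNReal.ofReal (c ^ 2)) :
    ‖hf.toLp f‖ = c := by
  have h2 := lint_sq_eq hf
  rw [h] at h2
  have h3 : c ^ 2 = ‖hf.toLp f‖ ^ 2 :=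
    (ENNReal.ofReal_eq_ofReal_iff (by positivity) (by positivity)).mp h2
  have h4 := congrArg Real.sqrt h3
  rw [Real.sqrt_sq hc, Real.sqrt_sq (norm_nonneg _)] at h4
  exact h4.symm
  

section Main

variable {H0 : Type*} [NormedAddCommGroup H0] [InnerProductSpace ℂ H0] [CompleteSpace H0]
variable (W : H0 ≃ₗᵢ[ℂ] Lp ℂ 2 rhoModel)

lemma norm_sq_eq (F : lp (fun _ : ℕ => H0) 2) : ‖F‖ ^ 2 = ∑' n, ‖F n‖ ^ 2 := by
  have h := lp.norm_rpow_eq_tsum (p := 2) (by norm_num) F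
  rw [show ((2 : ℝ≥0∞)).toReal = ((2 : ℕ) : ℝ) by norm_num] at h
  simpa [Real.rpow_natCast] using h

lemma summable_norm_sq (F : lp (fun _ : ℕ => H0) 2) : Summable fun n => ‖F n‖ ^ 2 := by
  have h := (memℓp_gen_iff (p := 2) (E := fun _ : ℕ => H0) (by norm_num)).mp (lp.memℓp F)
  rw [show ((2 : ℝ≥0∞)).toReal = ((2 : ℕ) : ℝ) by norm_num] at h
  simpa [Real.rpow_natCast] using h

/-- The glued function on the `ν` model. -/
noncomputable def gfun (F : ∀ _ : ℕ, H0) : ℝ × (ℕ × Fin 2) → ℂ :=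
  fun q => (W (F q.2.1) : ℝ × Fin 2 → ℂ) (q.1 - q.2.1, q.2.2)

lemma gfun_eval (F : ∀ _ : ℕ, H0) (n : ℕ) (j : Fin 2) (x : ℝ) :
    gfun W F (x + n, (n, j)) = (W (F n) : ℝ × Fin 2 → ℂ) (x, j) := by
  simp [gfun]

lemma gfun_aesm (F : ∀ _ : ℕ, H0) : AEStronglyMeasurable (gfun W F) nuModel := by
  rw [aesm_nu_iff]
  intro n j
  have h0 := (aesm_rho_iff.mp (Lp.aestronglyMeasurable (W (F n)))) j
  simpa only [gfun_eval] using h0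

lemma gfun_lint (F : lp (fun _ : ℕ => H0) 2) :
    ∫⁻ q, (‖gfun W ⇑F q‖₊ : ℝ≥0∞) ^ (2 : ℝ) ∂nuModel = ENNReal.ofReal (‖F‖ ^ 2) := by
  rw [lint_nu]
  have h1 : ∀ n : ℕ, (∑' j : Fin 2,
      ∫⁻ x, (‖gfun W ⇑F (x + n, (n, j))‖₊ : ℝ≥0∞) ^ (2 : ℝ) ∂mu0)
      = ENNReal.ofReal (‖F n‖ ^ 2) := by
    intro n
    have h2 := lint_sq_lp (W (F n))
    rw [lint_rho] at h2
    simp only [gfun_eval]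
    rw [h2, W.norm_map]
  simp only [h1]
  rw [← ENNReal.ofReal_tsum_of_nonneg (fun n => by positivity) (summable_norm_sq F),
    ← norm_sq_eq]

lemma gfun_memℒp (F : lp (fun _ : ℕ => H0) 2) : MemLp (gfun W ⇑F) 2 nuModel :=
  memℒp_two_of_lint (gfun_aesm W ⇑F) (gfun_lint W F)

/-- The forward map of the unitary. -/
noncomputable def Tfun (F : lp (fun _ : ℕ => H0) 2) : Lp ℂ 2 nuModel :=
  (gfun_memℒp W F).toLp (gfun W ⇑F)

lemma Tfun_norm (F : lp (fun _ : ℕ => H0) 2) : ‖Tfun W F‖ = ‖F‖ :=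
  norm_toLp_of_lint _ (norm_nonneg F) (gfun_lint W F)

lemma Tfun_spec (F : lp (fun _ : ℕ => H0) 2) (n : ℕ) (j : Fin 2) :
    ∀ᵐ x ∂mu0, (Tfun W F : ℝ × (ℕ × Fin 2) → ℂ) (x + n, (n, j))
      = (W (F n) : ℝ × Fin 2 → ℂ) (x, j) := by
  have h : ⇑(Tfun W F) =ᵐ[nuModel] gfun W ⇑F := MemLp.coeFn_toLp (gfun_memℒp W F)
  have h2 := (ae_nu_iff.mp h) n j
  filter_upwards [h2] with x hx
  rw [hx, gfun_eval]


lemma Tfun_add (F G : lp (fun _ : ℕ => H0) 2) : Tfun W (F + G) = Tfun W F + Tfun W G := by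
  apply Lp.ext
  refine Filter.EventuallyEq.trans ?_ (Lp.coeFn_add (Tfun W F) (Tfun W G)).symm
  refine ae_nu_iff.mpr fun n j => ?_
  filter_upwards [Tfun_spec W (F + G) n j, Tfun_spec W F n j, Tfun_spec W G n j,
    (ae_rho_iff.mp (Lp.coeFn_add (W (F n)) (W (G n)))) j] with x h1 h2 h3 h4
  rw [Pi.add_apply, h1, h2, h3]
  have e : (F + G) n = F n + G n := by rw [lp.coeFn_add]; rfl
  rw [e, map_add]
  simpa using h4

lemma Tfun_smul (c : ℂ) (F : lp (fun _ : ℕ => H0) 2) : Tfun W (c • F) = c • Tfun W F := by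
  apply Lp.ext
  refine Filter.EventuallyEq.trans ?_ (Lp.coeFn_smul c (Tfun W F)).symm
  refine ae_nu_iff.mpr fun n j => ?_
  filter_upwards [Tfun_spec W (c • F) n j, Tfun_spec W F n j,
    (ae_rho_iff.mp (Lp.coeFn_smul c (W (F n)))) j] with x h1 h2 h3
  rw [Pi.smul_apply, h1, h2]
  have e : (c • F) n = c • F n := by rw [lp.coeFn_smul]; rfl
  rw [e, W.map_smul]
  simpa using h3

/-- The forward unitary as a linear isometry. -/
noncomputable def Tli : lp (fun _ : ℕ => H0) 2 →ₗᵢ[ℂ] Lp ℂ 2 nuModel where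
  toFun := Tfun W
  map_add' := Tfun_add W
  map_smul' := Tfun_smul W
  norm_map' := Tfun_norm W

lemma Tli_coe : ⇑(Tli W) = Tfun W := rfl

lemma Tfun_surj : Function.Surjective (Tfun W) := by
  intro φ
  set ψ : ℕ → ℝ × Fin 2 → ℂ :=
    fun n q => (φ : ℝ × (ℕ × Fin 2) → ℂ) (q.1 + n, (n, q.2)) with hψ
  have hψm : ∀ n, AEStronglyMeasurable (ψ n) rhoModel := fun n =>
    aesm_rho_iff.mpr fun j => (aesm_nu_iff.mp (Lp.aestronglyMeasurable φ)) n j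
  set J : ℕ → ℝ≥0∞ := fun n => ∫⁻ q, (‖ψ n q‖₊ : ℝ≥0∞) ^ (2 : ℝ) ∂rhoModel with hJ
  have hJsum : ∑' n, J n = ENNReal.ofReal (‖φ‖ ^ 2) := by
    rw [← lint_sq_lp φ, lint_nu]
    exact tsum_congr fun n => by rw [hJ]; simp only; rw [lint_rho]
  have hJne : ∀ n, J n ≠ ∞ := fun n =>
    ne_top_of_le_ne_top (hJsum ▸ ENNReal.ofReal_ne_top) (ENNReal.le_tsum n)
  have hmem : ∀ n, MemLp (ψ n) 2 rhoModel := fun n =>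
    ⟨hψm n, by
      rw [eLpNorm_two]
      exact ENNReal.rpow_lt_top_of_nonneg (by norm_num) (hJne n)⟩
  set Φ : ∀ _ : ℕ, H0 := fun n => W.symm ((hmem n).toLp (ψ n)) with hΦ
  have hΦn : ∀ n, ENNReal.ofReal (‖Φ n‖ ^ 2) = J n := by
    intro n
    rw [hΦ]
    simp only [LinearIsometryEquiv.norm_map]
    exact (lint_sq_eq (hmem n)).symm
  have hsum2 : Summable fun n => ‖Φ n‖ ^ 2 := by
    have h1 : ∑' n, ENNReal.ofReal (‖Φ n‖ ^ 2) ≠ ∞ := by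
      simp only [hΦn]; rw [hJsum]; exact ENNReal.ofReal_ne_top
    have h2 := ENNReal.summable_toReal h1
    refine h2.congr fun n => ?_
    rw [ENNReal.toReal_ofReal (by positivity)]
  have hΦmem : Memℓp Φ 2 := by
    apply memℓp_gen
    rw [show ((2 : ℝ≥0∞)).toReal = ((2 : ℕ) : ℝ) by norm_num]
    simpa [Real.rpow_natCast] using hsum2
  refine ⟨⟨Φ, hΦmem⟩, ?_⟩
  apply Lp.ext
  refine ae_nu_iff.mpr fun n j => ?_
  have hWn : W (Φ n) = (hmem n).toLp (ψ n) := by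
    rw [hΦ]; exact W.apply_symm_apply _
  filter_upwards [Tfun_spec W ⟨Φ, hΦmem⟩ n j,
    (ae_rho_iff.mp (MemLp.coeFn_toLp (hmem n))) j] with x h1 h2
  rw [h1]
  show (W (Φ n) : ℝ × Fin 2 → ℂ) (x, j) = _
  rw [hWn]
  exact h2

lemma exists_V : ∃ V : lp (fun _ : ℕ => H0) 2 ≃ₗᵢ[ℂ] Lp ℂ 2 nuModel,
    ∀ (F : lp (fun _ : ℕ => H0) 2) (n : ℕ) (j : Fin 2), ∀ᵐ x ∂mu0,
      (V F : ℝ × (ℕ × Fin 2) → ℂ) (x + n, (n, j)) = (W (F n) : ℝ × Fin 2 → ℂ) (x, j) := by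
  have hs : Function.Surjective (Tli W) := by rw [Tli_coe]; exact Tfun_surj W
  refine ⟨LinearIsometryEquiv.ofSurjective (Tli W) hs, fun F n j => ?_⟩
  have h : (LinearIsometryEquiv.ofSurjective (Tli W) hs) F = Tfun W F := by
    rw [LinearIsometryEquiv.coe_ofSurjective]; rfl
  rw [h]
  exact Tfun_spec W F n j


lemma key_iff (Hrel : H0 → H0 → Prop)
    (hW : ∀ f u : H0, Hrel f u ↔
      (W u : ℝ × Fin 2 → ℂ) =ᵐ[rhoModel] fun p => (p.1 : ℂ) * (W f) p)
    (A0rel : lp (fun _ : ℕ => H0) 2 → lp (fun _ : ℕ => H0) 2 → Prop)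
    (hA0 : ∀ F U : lp (fun _ : ℕ => H0) 2,
      A0rel F U ↔ ∀ n : ℕ, Hrel (F n) (U n - ((n : ℝ) : ℂ) • F n))
    (V : lp (fun _ : ℕ => H0) 2 ≃ₗᵢ[ℂ] Lp ℂ 2 nuModel)
    (hV : ∀ (F : lp (fun _ : ℕ => H0) 2) (n : ℕ) (j : Fin 2), ∀ᵐ x ∂mu0,
      (V F : ℝ × (ℕ × Fin 2) → ℂ) (x + n, (n, j)) = (W (F n) : ℝ × Fin 2 → ℂ) (x, j))
    (F U : lp (fun _ : ℕ => H0) 2) :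
    A0rel F U ↔
      (V U : ℝ × (ℕ × Fin 2) → ℂ) =ᵐ[nuModel] fun p => (p.1 : ℂ) * (V F) p := by
  rw [hA0]
  have hL : ∀ n : ℕ, (Hrel (F n) (U n - ((n : ℝ) : ℂ) • F n)) ↔
      ∀ j : Fin 2, ∀ᵐ x ∂mu0,
        (W (U n) : ℝ × Fin 2 → ℂ) (x, j)
          = ((x : ℂ) + ((n : ℝ) : ℂ)) * (W (F n)) (x, j) := by
    intro n
    rw [hW]
    have e1 : ⇑(W (U n - ((n : ℝ) : ℂ) • F n)) =ᵐ[rhoModel]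
        fun q => (W (U n) : ℝ × Fin 2 → ℂ) q - ((n : ℝ) : ℂ) * (W (F n)) q := by
      rw [W.map_sub, W.map_smul]
      filter_upwards [Lp.coeFn_sub (W (U n)) (((n : ℝ) : ℂ) • W (F n)),
        Lp.coeFn_smul (((n : ℝ) : ℂ)) (W (F n))] with q hq hq2
      rw [hq]
      simp only [Pi.sub_apply]
      rw [hq2]
      simp [smul_eq_mul]
    constructor
    · intro h
      have h2 : (fun q => (W (U n) : ℝ × Fin 2 → ℂ) q - ((n : ℝ) : ℂ) * (W (F n)) q)
          =ᵐ[rhoModel] fun q => (q.1 : ℂ) * (W (F n)) q := e1.symm.trans h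
      have h3 : ∀ᵐ q ∂rhoModel, (W (U n) : ℝ × Fin 2 → ℂ) q
          = ((q.1 : ℂ) + ((n : ℝ) : ℂ)) * (W (F n)) q := by
        filter_upwards [h2] with q hq
        linear_combination hq
      exact fun j => (ae_rho_iff.mp h3) j
    · intro h
      refine e1.trans ?_
      have h3 : ∀ᵐ q ∂rhoModel, (W (U n) : ℝ × Fin 2 → ℂ) q
          = ((q.1 : ℂ) + ((n : ℝ) : ℂ)) * (W (F n)) q := ae_rho_iff.mpr h
      filter_upwards [h3] with q hq
      rw [hq]; ring
  have hR : ((V U : ℝ × (ℕ × Fin 2) → ℂ) =ᵐ[nuModel] fun p => (p.1 : ℂ) * (V F) p) ↔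
      ∀ (n : ℕ) (j : Fin 2), ∀ᵐ x ∂mu0,
        (W (U n) : ℝ × Fin 2 → ℂ) (x, j)
          = ((x : ℂ) + ((n : ℝ) : ℂ)) * (W (F n)) (x, j) := by
    rw [show ((V U : ℝ × (ℕ × Fin 2) → ℂ) =ᵐ[nuModel] fun p => (p.1 : ℂ) * (V F) p) ↔
        ∀ᵐ q ∂nuModel, (V U : ℝ × (ℕ × Fin 2) → ℂ) q = (q.1 : ℂ) * (V F) q from Iff.rfl,
      ae_nu_iff]
    refine forall_congr' fun n => forall_congr' fun j => ?_
    constructor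
    · intro h
      filter_upwards [h, hV U n j, hV F n j] with x h1 h2 h3
      rw [← h2, h1, h3]
      push_cast
      ring
    · intro h
      filter_upwards [h, hV U n j, hV F n j] with x h1 h2 h3
      rw [h2, h3, h1]
      push_cast
      ring
  rw [hR]
  exact forall_congr' hL

end Main

section Mult

lemma ae_half : ∀ᵐ q ∂nuModel, (1 / 2 : ℝ) ≤ q.1 := by
  rw [ae_nu_iff]
  intro n j
  have h : ∀ᵐ x ∂mu0, x ∈ Set.Ici (1 / 2 : ℝ) :=
    ae_restrict_mem (measurableSet_Ici (a := (1 / 2 : ℝ)))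
  filter_upwards [h] with x hx
  have hn : (0 : ℝ) ≤ n := Nat.cast_nonneg n
  simp only [Set.mem_Ici] at hx
  linarith

noncomputable def mfun (Λ : ℂ) : ℝ × (ℕ × Fin 2) → ℂ := fun q => ((q.1 : ℂ) - Λ)⁻¹

lemma mfun_meas (Λ : ℂ) : Measurable (mfun Λ) :=
  ((Complex.measurable_ofReal.comp measurable_fst).sub measurable_const).inv

variable {Λ : ℂ} {δ : ℝ}

lemma memℒp_mul (hδ : 0 < δ) (hb : ∀ x : ℝ, 1 / 2 ≤ x → δ ≤ ‖(x : ℂ) - Λ‖)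
    (g : Lp ℂ 2 nuModel) : MemLp (fun q => mfun Λ q * g q) 2 nuModel := by
  have hm : AEStronglyMeasurable (fun q => mfun Λ q * (g : ℝ × (ℕ × Fin 2) → ℂ) q) nuModel :=
    (mfun_meas Λ).aestronglyMeasurable.mul (Lp.aestronglyMeasurable g)
  refine MemLp.of_le_mul (c := δ⁻¹) (Lp.memLp g) hm ?_
  filter_upwards [ae_half] with q hq
  have h1 : δ ≤ ‖(q.1 : ℂ) - Λ‖ := hb _ hq
  have h2 : ‖mfun Λ q‖ ≤ δ⁻¹ := by
    rw [mfun, norm_inv]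
    exact inv_anti₀ hδ h1
  calc ‖mfun Λ q * (g : ℝ × (ℕ × Fin 2) → ℂ) q‖
      = ‖mfun Λ q‖ * ‖(g : ℝ × (ℕ × Fin 2) → ℂ) q‖ := norm_mul _ _
    _ ≤ δ⁻¹ * ‖(g : ℝ × (ℕ × Fin 2) → ℂ) q‖ :=
        mul_le_mul_of_nonneg_right h2 (norm_nonneg _)

lemma eLpNorm_mul_le (hδ : 0 < δ) (hb : ∀ x : ℝ, 1 / 2 ≤ x → δ ≤ ‖(x : ℂ) - Λ‖)
    (g : Lp ℂ 2 nuModel) :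
    eLpNorm (fun q => mfun Λ q * g q) 2 nuModel
      ≤ (‖(δ⁻¹ : ℝ)‖₊ : ℝ≥0∞) * eLpNorm (⇑g) 2 nuModel := by
  have hmono : eLpNorm (fun q => mfun Λ q * g q) 2 nuModel
      ≤ eLpNorm ((δ⁻¹ : ℝ) • (g : ℝ × (ℕ × Fin 2) → ℂ)) 2 nuModel := by
    apply eLpNorm_mono_ae
    filter_upwards [ae_half] with q hq
    have h1 : δ ≤ ‖(q.1 : ℂ) - Λ‖ := hb _ hq
    have h2 : ‖mfun Λ q‖ ≤ δ⁻¹ := by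
      rw [mfun, norm_inv]
      exact inv_anti₀ hδ h1
    rw [Pi.smul_apply, norm_smul, norm_mul]
    have : ‖(δ⁻¹ : ℝ)‖ = δ⁻¹ := by rw [Real.norm_eq_abs, abs_of_nonneg (by positivity)]
    rw [this]
    exact mul_le_mul_of_nonneg_right h2 (norm_nonneg _)
  calc eLpNorm (fun q => mfun Λ q * g q) 2 nuModel
      ≤ eLpNorm ((δ⁻¹ : ℝ) • (g : ℝ × (ℕ × Fin 2) → ℂ)) 2 nuModel := hmono
    _ = (‖(δ⁻¹ : ℝ)‖₊ : ℝ≥0∞) * eLpNorm (⇑g) 2 nuModel := by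
        rw [eLpNorm_const_smul, enorm_eq_nnnorm]

lemma norm_toLp_mul_le (hδ : 0 < δ) (hb : ∀ x : ℝ, 1 / 2 ≤ x → δ ≤ ‖(x : ℂ) - Λ‖)
    (g : Lp ℂ 2 nuModel) :
    ‖(memℒp_mul hδ hb g).toLp _‖ ≤ δ⁻¹ * ‖g‖ := by
  rw [Lp.norm_toLp]
  have h1 := eLpNorm_mul_le hδ hb g
  have h2 : ((‖(δ⁻¹ : ℝ)‖₊ : ℝ≥0∞) * eLpNorm (⇑g) 2 nuModel) ≠ ∞ :=
    ENNReal.mul_ne_top ENNReal.coe_ne_top (Lp.eLpNorm_ne_top g)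
  have h3 := ENNReal.toReal_mono h2 h1
  rw [ENNReal.toReal_mul, ENNReal.coe_toReal] at h3
  have h4 : (‖(δ⁻¹ : ℝ)‖₊ : ℝ) = δ⁻¹ := by
    rw [coe_nnnorm, Real.norm_eq_abs, abs_of_nonneg (inv_pos.mpr hδ).le]
  rw [h4, ← Lp.norm_def] at h3
  exact h3

/-- multiplication by `((x : ℂ) - Λ)⁻¹` as a continuous linear map. -/
noncomputable def Mop (hδ : 0 < δ) (hb : ∀ x : ℝ, 1 / 2 ≤ x → δ ≤ ‖(x : ℂ) - Λ‖) :
    Lp ℂ 2 nuModel →L[ℂ] Lp ℂ 2 nuModel :=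
  LinearMap.mkContinuous
    { toFun := fun g => (memℒp_mul hδ hb g).toLp _
      map_add' := by
        intro g h
        apply Lp.ext
        refine Filter.EventuallyEq.trans (MemLp.coeFn_toLp _) ?_
        refine Filter.EventuallyEq.trans ?_ (Lp.coeFn_add _ _).symm
        filter_upwards [Lp.coeFn_add g h, MemLp.coeFn_toLp (memℒp_mul hδ hb g),
          MemLp.coeFn_toLp (memℒp_mul hδ hb h)] with q h1 h2 h3
        simp only [Pi.add_apply]
        rw [h2, h3, h1]
        simp [mul_add]
      map_smul' := by
        intro c g
        apply Lp.ext
        simp only [RingHom.id_apply]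
        refine Filter.EventuallyEq.trans (MemLp.coeFn_toLp (memℒp_mul hδ hb (c • g))) ?_
        refine Filter.EventuallyEq.trans ?_ (Lp.coeFn_smul _ _).symm
        filter_upwards [Lp.coeFn_smul c g, MemLp.coeFn_toLp (memℒp_mul hδ hb g)]
          with q h1 h2
        simp only [Pi.smul_apply]
        rw [h2, h1]
        simp only [Pi.smul_apply, smul_eq_mul]
        ring }
    δ⁻¹ (fun g => norm_toLp_mul_le hδ hb g)

lemma Mop_spec (hδ : 0 < δ) (hb : ∀ x : ℝ, 1 / 2 ≤ x → δ ≤ ‖(x : ℂ) - Λ‖)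
    (g : Lp ℂ 2 nuModel) :
    (Mop hδ hb g : ℝ × (ℕ × Fin 2) → ℂ) =ᵐ[nuModel] fun q => mfun Λ q * g q := by
  have h : Mop hδ hb g = (memℒp_mul hδ hb g).toLp _ := rfl
  rw [h]
  exact MemLp.coeFn_toLp _

end Mult

end DSAC


/-- Spectrum of the direct sum `A₀ = ⊕ₙ (H + n)`, where `H` has purely absolutely
continuous spectrum `[1/2, ∞)` of constant multiplicity `2` (expressed by a unitary
`W` onto the multiplication operator model `L²(ρ)`): `σ(A₀) = [1/2, ∞)` (statement
on bounded invertibility of `A₀ − Λ`), the spectrum of `A₀` is purely absolutely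
continuous (`A₀` is unitarily equivalent to multiplication by the spectral variable
on the absolutely continuous model `L²(ν)`), and the multiplicity function equals
`2n` on `(n − 1/2, n + 1/2)` (the number of spectral sheets of `ν` over such `E`). -/
theorem directSum_spectrum_ac {H0 : Type*} [NormedAddCommGroup H0]
    [InnerProductSpace ℂ H0] [CompleteSpace H0]
    (Hrel : H0 → H0 → Prop)
    (W : H0 ≃ₗᵢ[ℂ] Lp ℂ 2 rhoModel)
    -- `H` is (unitarily) multiplication by the spectral variable on `L²(ρ)`
    (hW : ∀ f u : H0, Hrel f u ↔
      (W u : ℝ × Fin 2 → ℂ) =ᵐ[rhoModel] fun p => (p.1 : ℂ) * (W f) p)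
    (A0rel : lp (fun _ : ℕ => H0) 2 → lp (fun _ : ℕ => H0) 2 → Prop)
    -- `A₀` is the orthogonal direct sum `⊕ₙ (H + n)`
    (hA0 : ∀ F U : lp (fun _ : ℕ => H0) 2,
      A0rel F U ↔ ∀ n : ℕ, Hrel (F n) (U n - ((n : ℝ) : ℂ) • F n)) :
    -- σ(A₀) = [1/2, ∞)
    (∀ Λ : ℂ, (¬(Λ.im = 0 ∧ 1 / 2 ≤ Λ.re)) ↔
      ∃ S : lp (fun _ : ℕ => H0) 2 →L[ℂ] lp (fun _ : ℕ => H0) 2,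
        (∀ G, A0rel (S G) (Λ • S G + G)) ∧
        (∀ F U, A0rel F U → S (U - Λ • F) = F)) ∧
    -- purely absolutely continuous: unitary equivalence with the a.c. model `L²(ν)`
    (∃ V : lp (fun _ : ℕ => H0) 2 ≃ₗᵢ[ℂ] Lp ℂ 2 nuModel,
      ∀ F U, A0rel F U ↔
        (V U : ℝ × (ℕ × Fin 2) → ℂ) =ᵐ[nuModel] fun p => (p.1 : ℂ) * (V F) p) ∧
    -- multiplicity function: `2n` a.e. on `(n − 1/2, n + 1/2)`
    (∀ n : ℕ, 1 ≤ n → ∀ E ∈ Set.Ioo ((n : ℝ) - 1 / 2) ((n : ℝ) + 1 / 2),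
      Nat.card {p : ℕ × Fin 2 // (p.1 : ℝ) + 1 / 2 ≤ E} = 2 * n) := by
  obtain ⟨V, hV⟩ := DSAC.exists_V W
  have keyiff := DSAC.key_iff W Hrel hW A0rel hA0 V hV
  refine ⟨?_, ⟨V, keyiff⟩, ?_⟩
  · intro Λ
    constructor
    · -- Λ outside [1/2,∞): resolvent exists
      intro hΛ
      obtain ⟨δ, hδ, hb⟩ : ∃ δ : ℝ, 0 < δ ∧ ∀ x : ℝ, 1 / 2 ≤ x → δ ≤ ‖(x : ℂ) - Λ‖ := by
        by_cases him : Λ.im = 0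
        · have hre : ¬(1 / 2 ≤ Λ.re) := fun h => hΛ ⟨him, h⟩
          push_neg at hre
          refine ⟨1 / 2 - Λ.re, by linarith, fun x hx => ?_⟩
          have h1 : |((x : ℂ) - Λ).re| ≤ ‖(x : ℂ) - Λ‖ := by
            exact Complex.abs_re_le_norm _
          have h2 : ((x : ℂ) - Λ).re = x - Λ.re := by simp
          rw [h2, abs_of_nonneg (by linarith)] at h1
          linarith
        · refine ⟨|Λ.im|, abs_pos.mpr him, fun x hx => ?_⟩
          have h1 : |((x : ℂ) - Λ).im| ≤ ‖(x : ℂ) - Λ‖ := by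
            exact Complex.abs_im_le_norm _
          have h2 : ((x : ℂ) - Λ).im = -Λ.im := by simp
          rw [h2, abs_neg] at h1
          exact h1
      have hne : ∀ x : ℝ, 1 / 2 ≤ x → (x : ℂ) - Λ ≠ 0 := by
        intro x hx h0
        have := hb x hx
        rw [h0, norm_zero] at this
        linarith
      set S : lp (fun _ : ℕ => H0) 2 →L[ℂ] lp (fun _ : ℕ => H0) 2 :=
        (V.symm.toLinearIsometry.toContinuousLinearMap).comp
          ((DSAC.Mop hδ hb).comp (V.toLinearIsometry.toContinuousLinearMap)) with hSdef
      have hSapp : ∀ G, S G = V.symm (DSAC.Mop hδ hb (V G)) := fun G => rfl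
      have hVS : ∀ G, V (S G) = DSAC.Mop hδ hb (V G) := by
        intro G
        rw [hSapp]
        exact V.apply_symm_apply _
      refine ⟨S, ?_, ?_⟩
      · intro G
        rw [keyiff]
        have hmap : V (Λ • S G + G) = Λ • DSAC.Mop hδ hb (V G) + V G := by
          rw [V.map_add, V.map_smul, hVS]
        rw [hmap, hVS]
        filter_upwards [Lp.coeFn_add (Λ • DSAC.Mop hδ hb (V G)) (V G),
          Lp.coeFn_smul Λ (DSAC.Mop hδ hb (V G)), DSAC.Mop_spec hδ hb (V G),
          DSAC.ae_half] with q h1 h2 h3 h4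
        rw [h1, Pi.add_apply, h2, Pi.smul_apply, smul_eq_mul, h3]
        have hinv : ((q.1 : ℂ) - Λ) * DSAC.mfun Λ q = 1 := by
          rw [DSAC.mfun]
          exact mul_inv_cancel₀ (hne q.1 h4)
        linear_combination (-((V G : ℝ × (ℕ × Fin 2) → ℂ) q)) * hinv
      · intro F U hFU
        apply V.injective
        have h1 : V (S (U - Λ • F)) = DSAC.Mop hδ hb (V (U - Λ • F)) := hVS _
        have hsub : V (U - Λ • F) = V U - Λ • V F := by rw [V.map_sub, V.map_smul]
        rw [h1, hsub]
        apply MeasureTheory.Lp.ext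
        filter_upwards [DSAC.Mop_spec hδ hb (V U - Λ • V F),
          Lp.coeFn_sub (V U) (Λ • V F), Lp.coeFn_smul Λ (V F),
          (keyiff F U).mp hFU, DSAC.ae_half] with q h1' h2 h3 h4 h5
        rw [h1', h2, Pi.sub_apply, h3, Pi.smul_apply, smul_eq_mul, h4]
        have hinv : ((q.1 : ℂ) - Λ) * DSAC.mfun Λ q = 1 := by
          rw [DSAC.mfun]
          exact mul_inv_cancel₀ (hne q.1 h5)
        linear_combination ((V F : ℝ × (ℕ × Fin 2) → ℂ) q) * hinv
    · -- Λ ∈ [1/2,∞): no resolvent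
      rintro ⟨S, hS1, hS2⟩ ⟨him, hre⟩
      set lam := Λ.re with hlam
      have hΛeq : Λ = (lam : ℂ) := by
        apply Complex.ext <;> simp [him, hlam]
      set ε : ℝ := 1 / (2 * (‖S‖ + 1)) with hεdef
      have hSnn : (0 : ℝ) ≤ ‖S‖ := norm_nonneg S
      have hε : 0 < ε := by positivity
      set B : Set (ℝ × (ℕ × Fin 2)) :=
        (Set.Ioc lam (lam + ε)) ×ˢ ({((0 : ℕ), (0 : Fin 2))} : Set (ℕ × Fin 2)) with hBdef
      have hBm : MeasurableSet B := measurableSet_Ioc.prod (measurableSet_singleton _)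
      have hνB : nuModel B = ENNReal.ofReal ε := by
        rw [DSAC.nu_eq, Measure.sum_apply _ hBm]
        have hterm : ∀ p : ℕ × Fin 2, (DSAC.mu0.map (DSAC.emb (p.1 : ℝ) p)) B
            = if p = ((0 : ℕ), (0 : Fin 2)) then ENNReal.ofReal ε else 0 := by
          intro p
          rw [(DSAC.emb_me (p.1 : ℝ) p).map_apply]
          by_cases hp : p = ((0 : ℕ), (0 : Fin 2))
          · subst hp
            have hpre : DSAC.emb ((0 : ℕ) : ℝ) ((0 : ℕ), (0 : Fin 2)) ⁻¹' B
                = Set.Ioc lam (lam + ε) := by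
              ext x
              simp [DSAC.emb, hBdef]
            rw [hpre, if_pos rfl, DSAC.mu0, Measure.restrict_apply measurableSet_Ioc]
            have hsub : Set.Ioc lam (lam + ε) ∩ Set.Ici (1 / 2 : ℝ)
                = Set.Ioc lam (lam + ε) :=
              Set.inter_eq_left.mpr fun x hx => le_trans hre (le_of_lt hx.1)
            rw [hsub, Real.volume_Ioc]
            congr 1
            ring
          · have hpre : DSAC.emb (p.1 : ℝ) p ⁻¹' B = ∅ := by
              ext x
              simp only [DSAC.emb, hBdef, Set.mem_preimage, Set.mem_prod,
                Set.mem_singleton_iff, Set.mem_empty_iff_false, iff_false, not_and]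
              intro _
              exact hp
            rw [hpre, if_neg hp]
            simp
        simp only [hterm]
        exact tsum_ite_eq _ _
      set χ : ℝ × (ℕ × Fin 2) → ℂ := B.indicator (fun _ => (1 : ℂ)) with hχdef
      have hχmem : MemLp χ 2 nuModel :=
        memLp_indicator_const 2 hBm (1 : ℂ) (Or.inr (by rw [hνB]; exact ENNReal.ofReal_ne_top))
      have hsnχ : eLpNorm χ 2 nuModel = ENNReal.ofReal ε ^ (1 / (2 : ℝ)) := by
        rw [hχdef, eLpNorm_indicator_const hBm (by norm_num) (by norm_num), hνB]
        simp
      have hnormχ : ‖hχmem.toLp χ‖ = Real.sqrt ε := by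
        rw [Lp.norm_toLp, hsnχ, ← ENNReal.toReal_rpow, ENNReal.toReal_ofReal hε.le,
          Real.sqrt_eq_rpow]
      set xχ : ℝ × (ℕ × Fin 2) → ℂ := fun q => (q.1 : ℂ) * χ q with hxχdef
      have hxχmem : MemLp xχ 2 nuModel := by
        refine MemLp.of_le_mul (c := |lam| + ε) hχmem ?_ ?_
        · exact ((Complex.measurable_ofReal.comp measurable_fst).mul
            (measurable_const.indicator hBm)).aestronglyMeasurable
        · refine Filter.Eventually.of_forall fun q => ?_
          rw [hxχdef]
          by_cases hq : q ∈ B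
          · have hq1 : q.1 ∈ Set.Ioc lam (lam + ε) := by
              rw [hBdef] at hq
              exact hq.1
            rw [norm_mul]
            have h1 : ‖((q.1 : ℝ) : ℂ)‖ ≤ |lam| + ε := by
              rw [Complex.norm_real, Real.norm_eq_abs]
              rcases hq1 with ⟨ha, hb'⟩
              rw [abs_le]
              constructor
              · have := abs_nonneg lam
                linarith [neg_abs_le lam]
              · linarith [le_abs_self lam]
            exact mul_le_mul_of_nonneg_right h1 (norm_nonneg _)
          · rw [hχdef]
            simp [Set.indicator_of_notMem hq]
      set F := V.symm (hχmem.toLp χ) with hFdef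
      set U := V.symm (hxχmem.toLp xχ) with hUdef
      have hVF : V F = hχmem.toLp χ := V.apply_symm_apply _
      have hVU : V U = hxχmem.toLp xχ := V.apply_symm_apply _
      have hFU : A0rel F U := by
        rw [keyiff, hVU, hVF]
        filter_upwards [MemLp.coeFn_toLp hxχmem, MemLp.coeFn_toLp hχmem] with q h1 h2
        rw [h1, h2]
      have heq : S (U - Λ • F) = F := hS2 F U hFU
      have hnF : ‖F‖ = Real.sqrt ε := by
        rw [hFdef, LinearIsometryEquiv.norm_map, hnormχ]
      have hbound : ‖U - Λ • F‖ ≤ ε * Real.sqrt ε := by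
        have h0 : U - Λ • F = V.symm (hxχmem.toLp xχ - Λ • hχmem.toLp χ) := by
          rw [V.symm.map_sub, V.symm.map_smul, ← hFdef, ← hUdef]
        rw [h0, LinearIsometryEquiv.norm_map, Lp.norm_def]
        have hae : ⇑(hxχmem.toLp xχ - Λ • hχmem.toLp χ) =ᵐ[nuModel]
            fun q => xχ q - Λ * χ q := by
          filter_upwards [Lp.coeFn_sub (hxχmem.toLp xχ) (Λ • hχmem.toLp χ),
            Lp.coeFn_smul Λ (hχmem.toLp χ), MemLp.coeFn_toLp hxχmem,
            MemLp.coeFn_toLp hχmem] with q h1 h2 h3 h4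
          rw [h1, Pi.sub_apply, h2, Pi.smul_apply, smul_eq_mul, h3, h4]
        rw [eLpNorm_congr_ae hae]
        have hmono : eLpNorm (fun q => xχ q - Λ * χ q) 2 nuModel
            ≤ eLpNorm ((ε : ℝ) • χ) 2 nuModel := by
          apply eLpNorm_mono_ae
          refine Filter.Eventually.of_forall fun q => ?_
          rw [Pi.smul_apply, norm_smul, Real.norm_eq_abs, abs_of_pos hε]
          by_cases hq : q ∈ B
          · have hq1 : q.1 ∈ Set.Ioc lam (lam + ε) := by
              rw [hBdef] at hq
              exact hq.1
            have hx1 : xχ q - Λ * χ q = ((q.1 : ℂ) - Λ) * χ q := by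
              rw [hxχdef]
              ring
            rw [hx1, norm_mul, hΛeq]
            have h1 : ‖((q.1 : ℝ) : ℂ) - ((lam : ℝ) : ℂ)‖ ≤ ε := by
              rw [← Complex.ofReal_sub, Complex.norm_real, Real.norm_eq_abs]
              rcases hq1 with ⟨ha, hb'⟩
              rw [abs_of_pos (by linarith)]
              linarith
            exact mul_le_mul_of_nonneg_right h1 (norm_nonneg _)
          · have hz : χ q = 0 := by
              rw [hχdef]
              simp [Set.indicator_of_notMem hq]
            rw [hxχdef]
            simp [hz]
        have hconst : eLpNorm ((ε : ℝ) • χ) 2 nuModel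
            = ENNReal.ofReal ε * ENNReal.ofReal ε ^ (1 / (2 : ℝ)) := by
          rw [eLpNorm_const_smul, hsnχ]
          congr 1
          rw [← Real.enorm_eq_ofReal hε.le]
        have hfin : ENNReal.ofReal ε * ENNReal.ofReal ε ^ (1 / (2 : ℝ)) ≠ ∞ :=
          ENNReal.mul_ne_top ENNReal.ofReal_ne_top
            (by
              exact (ENNReal.rpow_lt_top_of_nonneg (by norm_num) ENNReal.ofReal_ne_top).ne)
        calc (eLpNorm (fun q => xχ q - Λ * χ q) 2 nuModel).toReal
            ≤ (ENNReal.ofReal ε * ENNReal.ofReal ε ^ (1 / (2 : ℝ))).toReal :=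
              ENNReal.toReal_mono hfin (hconst ▸ hmono)
          _ = ε * Real.sqrt ε := by
              rw [ENNReal.toReal_mul, ENNReal.toReal_ofReal hε.le, ← ENNReal.toReal_rpow,
                ENNReal.toReal_ofReal hε.le, Real.sqrt_eq_rpow]
      have hsq : 0 < Real.sqrt ε := Real.sqrt_pos.mpr hε
      have hle : Real.sqrt ε ≤ ‖S‖ * (ε * Real.sqrt ε) := by
        calc Real.sqrt ε = ‖F‖ := hnF.symm
          _ = ‖S (U - Λ • F)‖ := by rw [heq]
          _ ≤ ‖S‖ * ‖U - Λ • F‖ := S.le_opNorm _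
          _ ≤ ‖S‖ * (ε * Real.sqrt ε) := mul_le_mul_of_nonneg_left hbound hSnn
      have h1 : 1 ≤ ‖S‖ * ε := by
        apply le_of_mul_le_mul_right _ hsq
        calc 1 * Real.sqrt ε = Real.sqrt ε := one_mul _
          _ ≤ ‖S‖ * (ε * Real.sqrt ε) := hle
          _ = ‖S‖ * ε * Real.sqrt ε := by ring
      have h2 : 0 < 2 * (‖S‖ + 1) := by linarith
      rw [hεdef, mul_one_div, le_div_iff₀ h2] at h1
      linarith
  · -- multiplicity
    intro n hn E hE
    have hiff : ∀ p : ℕ × Fin 2, ((p.1 : ℝ) + 1 / 2 ≤ E) ↔ p.1 < n := by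
      intro p
      obtain ⟨h1, h2⟩ := hE
      constructor
      · intro h
        by_contra hlt
        push_neg at hlt
        have : (n : ℝ) ≤ p.1 := Nat.cast_le.mpr hlt
        linarith
      · intro h
        have : ((p.1 : ℝ) + 1) ≤ n := by exact_mod_cast Nat.succ_le_of_lt h
        linarith
    have e1 : {p : ℕ × Fin 2 // (p.1 : ℝ) + 1 / 2 ≤ E} ≃ {p : ℕ × Fin 2 // p.1 < n} :=
      Equiv.subtypeEquivRight fun p => hiff p
    let e2 : {p : ℕ × Fin 2 // p.1 < n} ≃ Fin n × Fin 2 :=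
      { toFun := fun p => (⟨p.1.1, p.2⟩, p.1.2)
        invFun := fun q => ⟨(q.1.1, q.2), q.1.2⟩
        left_inv := fun p => rfl
        right_inv := fun q => rfl }
    rw [Nat.card_congr (e1.trans e2)]
    simp [Nat.card_eq_fintype_card]
    ring
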